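/- arXiv:2203.14142 — 2 statements merged into one kernel-verified Lean document; each statement's English description precedes it below -/
import Mathlib

section
/- For any real number $a$ and any $k \geq 0$, the quantity $|(a+ib)^{k+a+ib}|$ (using the principal branch of the complex logarithm) tends to zero as $|b| \to \infty$. -/
open Complex Filter Real

private lemma arg_ge_aux (a b : ℝ) (hb1 : 1 ≤ b) (hba : |a| ≤ b) :
    π / 4 ≤ Complex.arg ((a : ℂ) + b * I) := by
  set s : ℂ := (a : ℂ) + b * I with hs
  have him : s.im = b := by simp [hs]
  have hre : s.re = a := by simp [hs]
  have hs0 : s ≠ 0 := by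
    intro h
    rw [h] at him
    simp at him
    linarith
  have habs_pos : 0 < ‖s‖ := norm_pos_iff.mpr hs0
  have hsq : ‖s‖ ^ 2 = a ^ 2 + b ^ 2 := by
    rw [Complex.sq_norm, Complex.normSq_apply, hre, him]; ring
  have h2 : Real.sqrt 2 ^ 2 = 2 := Real.sq_sqrt (by norm_num)
  have habs : ‖s‖ ≤ Real.sqrt 2 * b := by
    have hsq2 : ‖s‖ ^ 2 ≤ (Real.sqrt 2 * b) ^ 2 := by
      nlinarith [_root_.sq_abs a, abs_nonneg a]
    exact le_of_pow_le_pow_left₀ two_ne_zero (by positivity) hsq2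
  have hsin : Real.sqrt 2 / 2 ≤ Real.sin (Complex.arg s) := by
    rw [Complex.sin_arg, him, le_div_iff₀ habs_pos]
    nlinarith [Real.sqrt_nonneg 2]
  by_contra h
  push_neg at h
  have hnn : 0 ≤ Complex.arg s := Complex.arg_nonneg_iff.mpr (by rw [him]; linarith)
  have hpi : 0 < π := Real.pi_pos
  have := Real.strictMonoOn_sin (a := Complex.arg s) (b := π / 4)
    ⟨by linarith, by linarith⟩ ⟨by linarith, by linarith⟩ h
  rw [Real.sin_pi_div_four] at this
  linarith

/-- For any real `a` and any `k ≥ 0`, `|(a+ib)^(k+a+ib)| → 0` as `|b| → ∞`,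
using the principal branch of the complex power. -/
theorem abs_cpow_tendsto_zero (a k : ℝ) (hk : 0 ≤ k) :
    Tendsto (fun b : ℝ => ‖((a : ℂ) + b * I) ^ ((k : ℂ) + a + b * I)‖)
      (comap (fun b : ℝ => |b|) atTop) (nhds 0) := by
  set c : ℝ := |k + a| with hc
  set g : ℝ → ℝ := fun t => Real.sqrt 2 ^ c * (t ^ c * Real.exp (-(π / 4) * t)) with hgdef
  have hl : Tendsto (fun b : ℝ => |b|) (comap (fun b : ℝ => |b|) atTop) atTop :=
    tendsto_comap
  have hg : Tendsto g atTop (nhds 0) := by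
    have := (tendsto_rpow_mul_exp_neg_mul_atTop_nhds_zero c (π / 4)
      (by positivity)).const_mul (Real.sqrt 2 ^ c)
    simpa [hgdef] using this
  refine squeeze_zero' (Eventually.of_forall fun b => norm_nonneg _)
    ?_ (hg.comp hl)
  filter_upwards [hl.eventually_ge_atTop (max |a| 1)] with b hb
  have hb1 : 1 ≤ |b| := le_trans (le_max_right _ _) hb
  have hba : |a| ≤ |b| := le_trans (le_max_left _ _) hb
  have hbne : b ≠ 0 := by
    intro h; rw [h] at hb1; simp at hb1; linarith
  set s : ℂ := (a : ℂ) + b * I with hs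
  have him : s.im = b := by simp [hs]
  have hs0 : s ≠ 0 := by
    intro h; rw [h] at him; simp at him; exact hbne him.symm
  have habs_pos : 0 < ‖s‖ := norm_pos_iff.mpr hs0
  have h2 : Real.sqrt 2 ^ 2 = 2 := Real.sq_sqrt (by norm_num)
  have hsq : ‖s‖ ^ 2 = a ^ 2 + b ^ 2 := by
    rw [Complex.sq_norm, Complex.normSq_apply]; simp [hs]; ring
  have habs : ‖s‖ ≤ Real.sqrt 2 * |b| := by
    have hsq2 : ‖s‖ ^ 2 ≤ (Real.sqrt 2 * |b|) ^ 2 := by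
      nlinarith [_root_.sq_abs a, _root_.sq_abs b, abs_nonneg a, abs_nonneg b]
    exact le_of_pow_le_pow_left₀ two_ne_zero (by positivity) hsq2
  have h1s : 1 ≤ ‖s‖ := by
    calc (1 : ℝ) ≤ |b| := hb1
    _ = |s.im| := by rw [him]
    _ ≤ ‖s‖ := Complex.abs_im_le_norm s
  have h2b : 1 ≤ Real.sqrt 2 * |b| := le_trans h1s habs
  -- arg bound
  have harg : π / 4 * |b| ≤ Complex.arg s * b := by
    rcases lt_or_ge 0 b with hbpos | hbnp
    · have hab : |b| = b := abs_of_pos hbpos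
      have h1 : π / 4 ≤ Complex.arg s :=
        arg_ge_aux a b (hab ▸ hb1) (hab ▸ hba)
      rw [hab]
      exact mul_le_mul_of_nonneg_right h1 hbpos.le
    · have hbneg : b < 0 := lt_of_le_of_ne hbnp hbne
      have hab : |b| = -b := abs_of_neg hbneg
      set t : ℂ := (a : ℂ) + (-b : ℝ) * I with ht
      have h1 : π / 4 ≤ Complex.arg t :=
        arg_ge_aux a (-b) (hab ▸ hb1) (hab ▸ hba)
      have hst : s = (starRingEnd ℂ) t := by
        rw [hs, ht]; apply Complex.ext <;> simp
      have htpi : Complex.arg t ≠ π := by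
        rw [ne_eq, Complex.arg_eq_pi_iff]
        push_neg
        intro _
        simpa [ht] using hbne
      have hargs : Complex.arg s = -Complex.arg t := by
        rw [hst, Complex.arg_conj, if_neg htpi]
      rw [hargs, hab]
      nlinarith
  -- main estimate
  have hnum : ‖s‖ ^ (k + a) ≤ Real.sqrt 2 ^ c * |b| ^ c := by
    rw [← Real.mul_rpow (Real.sqrt_nonneg 2) (abs_nonneg b)]
    rcases le_or_gt 0 (k + a) with hka | hka
    · rw [hc, _root_.abs_of_nonneg hka]
      exact Real.rpow_le_rpow (norm_nonneg s) habs hka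
    · calc ‖s‖ ^ (k + a) ≤ 1 :=
          Real.rpow_le_one_of_one_le_of_nonpos h1s hka.le
      _ ≤ (Real.sqrt 2 * |b|) ^ c := Real.one_le_rpow h2b (abs_nonneg _)
  rw [Complex.norm_cpow_of_ne_zero hs0]
  have hre : ((k : ℂ) + a + b * I).re = k + a := by simp
  have him' : ((k : ℂ) + a + b * I).im = b := by simp
  rw [hre, him']
  calc ‖s‖ ^ (k + a) / Real.exp (Complex.arg s * b)
      ≤ (Real.sqrt 2 ^ c * |b| ^ c) * Real.exp (-(π / 4) * |b|) := by
        rw [div_eq_mul_inv, ← Real.exp_neg]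
        refine mul_le_mul hnum (Real.exp_le_exp.2 (by linarith)) (Real.exp_pos _).le
          (by positivity)
    _ = g |b| := by rw [hgdef]; ring
end

section
/- Let $\{\lambda_j\}$ be a sequence of non-negative reals with $\sum_j(\lambda_j+\xi)^{-\sigma} < \infty$ for all $\sigma > n/2$, $\xi > 0$, and let $\zeta_{\Delta+\xi}(s)$ denote the meromorphic continuation in $s$ of $\sum_j(\lambda_j+\xi)^{-s}$. Then for any fixed real $s \notin -\mathbb{N}$ (away from the poles) and any nonempty open set $U \subset (0,\infty)$, the function $\xi \mapsto \zeta_{\Delta+\xi}(s)$ is not identically zero on $U$. -/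
open Complex Finset
open scoped NNReal Nat

/-- iterated derivative of `w ↦ (1+w)^(-t)` on the slit domain. -/
lemma iteratedDeriv_one_add_cpow (t : ℂ) (k : ℕ) :
    ∀ w : ℂ, (1 + w) ∈ Complex.slitPlane →
      iteratedDeriv k (fun z : ℂ => (1 + z) ^ (-t)) w
        = (∏ i ∈ range k, (-t - i)) * (1 + w) ^ (-t - k) := by
  induction k with
  | zero => intro w hw; simp
  | succ k ih =>
    intro w hw
    have hopen : IsOpen {z : ℂ | (1 + z) ∈ Complex.slitPlane} :=
      Complex.isOpen_slitPlane.preimage (by fun_prop)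
    have hev : iteratedDeriv k (fun z : ℂ => (1 + z) ^ (-t))
        =ᶠ[nhds w] fun z => (∏ i ∈ range k, (-t - i)) * (1 + z) ^ (-t - k) := by
      filter_upwards [hopen.mem_nhds hw] with z hz using ih z hz
    rw [iteratedDeriv_succ, hev.deriv_eq]
    have hd : HasDerivAt (fun z : ℂ => (∏ i ∈ range k, (-t - i)) * (1 + z) ^ (-t - k))
        ((∏ i ∈ range k, (-t - i)) * ((-t - k) * (1 + w) ^ (-t - k - 1) * 1)) w := by
      exact (((hasDerivAt_id w).const_add 1).cpow_const hw).const_mul _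
    rw [hd.deriv]
    rw [prod_range_succ]
    have : -t - ((k : ℂ) + 1) = -t - (k : ℂ) - 1 := by ring
    push_cast
    rw [this]
    ring

/-- Generalized binomial series, radius 1. -/
lemma binom_hasSum (t x : ℂ) (hx : ‖x‖ < 1) :
    HasSum (fun k : ℕ => ((∏ i ∈ range k, (-t - i)) / (k ! : ℂ)) * x ^ k)
      ((1 + x) ^ (-t)) := by
  set f : ℂ → ℂ := fun w => (1 + w) ^ (-t) with hf
  set r : ℝ := (1 + ‖x‖) / 2 with hr
  have hr0 : 0 < r := by positivity
  have hxr : ‖x‖ < r := by rw [hr]; linarith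
  have hr1 : r < 1 := by rw [hr]; linarith
  set R : NNReal := ⟨r, hr0.le⟩ with hR
  have hdiff : DifferentiableOn ℂ f (Metric.closedBall (0:ℂ) R) := by
    intro w hw
    have hwn : ‖w‖ ≤ r := by simp [Metric.mem_closedBall] at hw; exact hw
    have hw1 : (1 + w) ∈ Complex.slitPlane := by
      refine Complex.mem_slitPlane_iff.2 (Or.inl ?_)
      simp only [Complex.add_re, Complex.one_re]
      have h1 : |w.re| ≤ r := le_trans (Complex.abs_re_le_norm w) hwn
      linarith [(abs_le.1 h1).1]
    exact (((differentiableAt_const (1:ℂ)).add differentiableAt_id).cpow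
      (differentiableAt_const _) hw1).differentiableWithinAt
  have hps := hdiff.hasFPowerSeriesOnBall (by exact_mod_cast hr0)
  have hxball : x ∈ EMetric.ball (0:ℂ) (R : ENNReal) := by
    show edist x 0 < _
    rw [edist_zero_right]
    exact_mod_cast hxr
  have h := hps.hasSum_iteratedFDeriv hxball
  have hterm : ∀ k : ℕ, ((k ! : ℂ))⁻¹ • iteratedFDeriv ℂ k f 0 (fun _ => x)
      = ((∏ i ∈ range k, (-t - i)) / (k ! : ℂ)) * x ^ k := by
    intro k
    have h1 : (fun _ : Fin k => x) = fun _ : Fin k => x • (1 : ℂ) := by simp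
    rw [h1, (iteratedFDeriv ℂ k f 0).map_smul_univ]
    have h2 : iteratedDeriv k f 0 = ∏ i ∈ range k, (-t - i) := by
      have := iteratedDeriv_one_add_cpow t k 0 (by simp [Complex.one_mem_slitPlane])
      simpa using this
    rw [iteratedDeriv_eq_iteratedFDeriv] at h2
    rw [h2]
    simp [smul_eq_mul]
    ring
  have h0 : f (0 + x) = (1 + x) ^ (-t) := by simp [hf]
  rw [h0] at h
  rw [← funext hterm]
  exact h

/-- Binomial expansion of `(a+δ)^(-t)` around `a`, for `0 < a`, `|δ| < a`. -/
lemma binom_shift (t : ℂ) (a δ : ℝ) (ha : 0 < a) (hd : |δ| < a) :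
    HasSum (fun k : ℕ => ((∏ i ∈ range k, (-t - i)) / (k ! : ℂ)) * (δ:ℂ) ^ k
        * ((a:ℂ)) ^ (-(t + k)))
      (((a + δ : ℝ) : ℂ) ^ (-t)) := by
  have haδ : 0 < a + δ := by have := abs_lt.1 hd; linarith [this.1]
  have hx : ‖((δ / a : ℝ) : ℂ)‖ < 1 := by
    rw [Complex.norm_real]
    rw [Real.norm_eq_abs, abs_div, abs_of_pos ha, div_lt_one ha]
    exact hd
  have h := (binom_hasSum t _ hx).mul_left ((a:ℂ) ^ (-t))
  have ha0 : (a : ℂ) ≠ 0 := by exact_mod_cast ha.ne'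
  have hterm : ∀ k : ℕ,
      (a:ℂ) ^ (-t) * (((∏ i ∈ range k, (-t - i)) / (k ! : ℂ)) * ((δ / a : ℝ) : ℂ) ^ k)
      = ((∏ i ∈ range k, (-t - i)) / (k ! : ℂ)) * (δ:ℂ) ^ k * ((a:ℂ)) ^ (-(t + k)) := by
    intro k
    have h1 : ((a:ℂ)) ^ (-(t + k)) = (a:ℂ) ^ (-t) * ((a:ℂ) ^ (k:ℕ))⁻¹ := by
      rw [show -(t + (k:ℂ)) = -t + (-(k:ℂ)) by ring, Complex.cpow_add _ _ ha0]
      congr 1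
      rw [Complex.cpow_neg, Complex.cpow_natCast]
    rw [h1]
    push_cast
    rw [div_pow]
    field_simp
  rw [funext hterm] at h
  have hrhs : (a:ℂ) ^ (-t) * (1 + ((δ / a : ℝ) : ℂ)) ^ (-t) = ((a + δ : ℝ) : ℂ) ^ (-t) := by
    have h2 : (1 : ℂ) + ((δ / a : ℝ) : ℂ) = (((a + δ) / a : ℝ) : ℂ) := by
      push_cast
      field_simp
    rw [h2, ← Complex.mul_cpow_ofReal_nonneg ha.le (by positivity)]
    congr 1
    push_cast
    field_simp
  rw [hrhs] at h
  exact h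

lemma coeff_norm_le (t : ℂ) (B : ℝ) (hB : ‖t‖ ≤ B) (k : ℕ) :
    ‖(∏ i ∈ range k, (-t - i)) / (k ! : ℂ)‖ ≤ (∏ i ∈ range k, (B + i)) / (k ! : ℝ) := by
  rw [norm_div]
  have h1 : ‖((k ! : ℂ))‖ = (k ! : ℝ) := by
    rw [show ((k ! : ℂ)) = ((k ! : ℝ) : ℂ) by push_cast; ring, Complex.norm_real,
      Real.norm_eq_abs, _root_.abs_of_nonneg (by positivity)]
  rw [h1]
  apply div_le_div_of_nonneg_right ?_ (by positivity) |>.trans_eq rfl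
  · rw [norm_prod]
    apply Finset.prod_le_prod (fun i _ => norm_nonneg _)
    intro i _
    calc ‖-t - (i:ℂ)‖ ≤ ‖-t‖ + ‖(i:ℂ)‖ := norm_sub_le _ _
      _ = ‖t‖ + i := by rw [norm_neg]; congr 1; simp [Complex.norm_natCast]
      _ ≤ B + i := by linarith

lemma ratio_summable (B q : ℝ) (hB : 1 ≤ B) (hq0 : 0 ≤ q) (hq : q < 1) :
    Summable (fun k : ℕ => (∏ i ∈ range k, (B + i)) / (k ! : ℝ) * q ^ k) := by
  rcases eq_or_lt_of_le hq0 with h0 | h0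
  · apply summable_of_ne_finset_zero (s := {0})
    intro k hk
    simp only [Finset.mem_singleton] at hk
    rw [← h0, zero_pow hk, mul_zero]
  · have hpos : ∀ k : ℕ, 0 < (∏ i ∈ range k, (B + i)) / (k ! : ℝ) * q ^ k := by
      intro k
      have : 0 < ∏ i ∈ range k, (B + i) :=
        Finset.prod_pos fun i _ => by positivity
      positivity
    apply summable_of_ratio_test_tendsto_lt_one hq
    · exact Filter.Eventually.of_forall fun k => (hpos k).ne'
    · have hval : ∀ k : ℕ, ‖(∏ i ∈ range (k+1), (B + i)) / ((k+1)! : ℝ) * q ^ (k+1)‖ /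
          ‖(∏ i ∈ range k, (B + i)) / (k ! : ℝ) * q ^ k‖
          = (1 + (B - 1) * (1 / ((k:ℝ)+1))) * q := by
        intro k
        rw [Real.norm_eq_abs, Real.norm_eq_abs, abs_of_pos (hpos _), abs_of_pos (hpos _)]
        rw [Finset.prod_range_succ, Nat.factorial_succ, pow_succ]
        push_cast
        have hk1 : ((k:ℝ) + 1) ≠ 0 := by positivity
        have hkf : ((k ! : ℝ)) ≠ 0 := by positivity
        have hqk : q ^ k ≠ 0 := by positivity
        have hpr : (∏ i ∈ range k, (B + i)) ≠ 0 :=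
          (Finset.prod_pos fun i _ => by positivity).ne'
        field_simp
        ring
      rw [funext hval]
      have h1 : Filter.Tendsto (fun k : ℕ => 1 + (B - 1) * (1 / ((k:ℝ)+1))) Filter.atTop
          (nhds 1) := by
        have := tendsto_one_div_add_atTop_nhds_zero_nat.const_mul (B - 1)
        have h2 := this.const_add 1
        simpa using h2
      simpa using h1.mul_const q

section Main

variable (n : ℕ) (lam : ℕ → ℝ) (hlam : ∀ j, 0 ≤ lam j)
  (hsum : ∀ σ : ℝ, (n : ℝ) / 2 < σ → ∀ ξ : ℝ, 0 < ξ →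
      Summable fun j => (lam j + ξ) ^ (-σ))

include hlam in
lemma norm_term (ξ₀ : ℝ) (hξ₀ : 0 < ξ₀) (τ : ℂ) (j : ℕ) :
    ‖((lam j + ξ₀ : ℝ) : ℂ) ^ (-τ)‖ = (lam j + ξ₀) ^ (-τ.re) := by
  have ha : 0 < lam j + ξ₀ := by have := hlam j; linarith
  rw [Complex.norm_cpow_eq_rpow_re_of_pos ha]
  simp

include hlam hsum in
lemma summable_shift (ξ₀ : ℝ) (hξ₀ : 0 < ξ₀) (τ : ℂ) (hτ : (n:ℝ)/2 < τ.re) :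
    Summable fun j => ((lam j + ξ₀ : ℝ) : ℂ) ^ (-τ) := by
  apply Summable.of_norm
  have := hsum τ.re hτ ξ₀ hξ₀
  apply this.congr
  intro j
  exact (norm_term lam hlam ξ₀ hξ₀ τ j).symm

include hlam hsum in
lemma W_norm_bound (ξ₀ : ℝ) (hξ₀ : 0 < ξ₀) (τ : ℂ) (hτ : (n:ℝ)/2 + 1 ≤ τ.re) :
    ‖∑' j, ((lam j + ξ₀ : ℝ) : ℂ) ^ (-τ)‖
      ≤ (∑' j, (lam j + ξ₀) ^ (-((n:ℝ)/2+1))) * ξ₀ ^ ((n:ℝ)/2 + 1 - τ.re) := by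
  set σ₁ : ℝ := (n:ℝ)/2 + 1 with hσ₁
  have hσ : (n:ℝ)/2 < σ₁ := by rw [hσ₁]; linarith
  have hτ' : (n:ℝ)/2 < τ.re := lt_of_lt_of_le hσ hτ
  have hsn : Summable fun j => ‖((lam j + ξ₀ : ℝ) : ℂ) ^ (-τ)‖ :=
    (summable_shift n lam hlam hsum ξ₀ hξ₀ τ hτ').norm
  calc ‖∑' j, ((lam j + ξ₀ : ℝ) : ℂ) ^ (-τ)‖
      ≤ ∑' j, ‖((lam j + ξ₀ : ℝ) : ℂ) ^ (-τ)‖ := norm_tsum_le_tsum_norm hsn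
    _ ≤ ∑' j, (lam j + ξ₀) ^ (-σ₁) * ξ₀ ^ (σ₁ - τ.re) := by
        apply Summable.tsum_le_tsum _ hsn
        · exact (hsum σ₁ hσ ξ₀ hξ₀).mul_right _
        · intro j
          have ha : 0 < lam j + ξ₀ := by have := hlam j; linarith
          rw [norm_term lam hlam ξ₀ hξ₀ τ j]
          have h1 : (-τ.re) = (-σ₁) + (σ₁ - τ.re) := by ring
          rw [h1, Real.rpow_add ha]
          apply mul_le_mul_of_nonneg_left _ (Real.rpow_nonneg ha.le _)
          exact Real.rpow_le_rpow_of_nonpos hξ₀ (by have := hlam j; linarith) (by linarith)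
    _ = (∑' j, (lam j + ξ₀) ^ (-σ₁)) * ξ₀ ^ (σ₁ - τ.re) := tsum_mul_right

end Main

section Main2

variable (n : ℕ) (lam : ℕ → ℝ) (hlam : ∀ j, 0 ≤ lam j)
  (hsum : ∀ σ : ℝ, (n : ℝ) / 2 < σ → ∀ ξ : ℝ, 0 < ξ →
      Summable fun j => (lam j + ξ) ^ (-σ))

include hlam hsum in
lemma summable_G (ξ₀ δ : ℝ) (hξ₀ : 0 < ξ₀) (hδ : |δ| < ξ₀) (t : ℂ) (ht : (n:ℝ)/2 < t.re) :
    Summable (fun p : ℕ × ℕ => ((∏ i ∈ range p.1, (-t - i)) / (p.1 ! : ℂ)) * (δ:ℂ) ^ p.1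
      * ((lam p.2 + ξ₀ : ℝ) : ℂ) ^ (-(t + p.1))) := by
  set B : ℝ := ‖t‖ + 1 with hB
  set q : ℝ := |δ| / ξ₀ with hq
  have hq0 : 0 ≤ q := by positivity
  have hq1 : q < 1 := by rw [hq, div_lt_one hξ₀]; exact hδ
  have hmaj : Summable (fun p : ℕ × ℕ =>
      ((∏ i ∈ range p.1, (B + i)) / (p.1 ! : ℝ) * q ^ p.1) * (lam p.2 + ξ₀) ^ (-t.re)) := by
    apply Summable.mul_of_nonneg (ratio_summable B q (by rw [hB]; linarith [norm_nonneg t]) hq0 hq1)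
      (hsum t.re ht ξ₀ hξ₀)
    · intro k
      have : 0 < ∏ i ∈ range k, (B + i) :=
        Finset.prod_pos fun i _ => by have := norm_nonneg t; rw [hB]; positivity
      positivity
    · intro j
      have := hlam j
      positivity
  apply Summable.of_norm_bounded hmaj
  rintro ⟨k, j⟩
  have ha : 0 < lam j + ξ₀ := by have := hlam j; linarith
  rw [norm_mul, norm_mul]
  rw [norm_term lam hlam ξ₀ hξ₀ (t + k) j]
  have h1 : ‖(∏ i ∈ range k, (-t - i)) / (k ! : ℂ)‖ ≤ (∏ i ∈ range k, (B + i)) / (k ! : ℝ) :=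
    coeff_norm_le t B (by rw [hB]; linarith) k
  have h2 : ‖(δ:ℂ) ^ k‖ = |δ| ^ k := by
    rw [norm_pow, Complex.norm_real, Real.norm_eq_abs]
  have h3 : (lam j + ξ₀) ^ (-(t + k)).re ≤ (lam j + ξ₀) ^ (-t.re) * (ξ₀ ^ k)⁻¹ := by
    have he : (-(t + (k:ℂ))).re = (-t.re) + (-(k:ℝ)) := by
      simp [Complex.add_re]
      ring
    rw [he, Real.rpow_add ha]
    apply mul_le_mul_of_nonneg_left _ (Real.rpow_nonneg ha.le _)
    calc (lam j + ξ₀) ^ (-(k:ℝ)) ≤ ξ₀ ^ (-(k:ℝ)) :=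
          Real.rpow_le_rpow_of_nonpos hξ₀ (by have := hlam j; linarith)
            (by positivity |> neg_nonpos_of_nonneg)
      _ = (ξ₀ ^ k)⁻¹ := by rw [Real.rpow_neg hξ₀.le, Real.rpow_natCast]
  calc ‖(∏ i ∈ range k, (-t - i)) / (k ! : ℂ)‖ * ‖(δ:ℂ) ^ k‖ * (lam j + ξ₀) ^ (-(t + k)).re
      ≤ ((∏ i ∈ range k, (B + i)) / (k ! : ℝ)) * |δ| ^ k
          * ((lam j + ξ₀) ^ (-t.re) * (ξ₀ ^ k)⁻¹) := by
        apply mul_le_mul _ h3 (Real.rpow_nonneg ha.le _) (by positivity)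
        · rw [h2]
          exact mul_le_mul_of_nonneg_right h1 (by positivity)
    _ = ((∏ i ∈ range k, (B + i)) / (k ! : ℝ) * q ^ k) * (lam j + ξ₀) ^ (-t.re) := by
        rw [hq, div_pow]
        field_simp

set_option maxHeartbeats 1000000 in
include hlam hsum in
lemma halfplane_expansion (ξ₀ δ : ℝ) (hξ₀ : 0 < ξ₀) (hδ : |δ| < ξ₀)
    (t : ℂ) (ht : (n:ℝ)/2 < t.re) :
    HasSum (fun k : ℕ => ((∏ i ∈ range k, (-t - i)) / (k ! : ℂ)) * (δ:ℂ) ^ k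
        * (∑' j, ((lam j + ξ₀ : ℝ) : ℂ) ^ (-(t + k))))
      (∑' j, ((lam j + (ξ₀ + δ) : ℝ) : ℂ) ^ (-t)) := by
  set G : ℕ × ℕ → ℂ := fun p => ((∏ i ∈ range p.1, (-t - i)) / (p.1 ! : ℂ)) * (δ:ℂ) ^ p.1
      * ((lam p.2 + ξ₀ : ℝ) : ℂ) ^ (-(t + p.1)) with hG
  have hGsum : Summable G := summable_G n lam hlam hsum ξ₀ δ hξ₀ hδ t ht
  have hfib_k : ∀ k : ℕ, HasSum (fun j => G (k, j))
      (((∏ i ∈ range k, (-t - i)) / (k ! : ℂ)) * (δ:ℂ) ^ k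
        * (∑' j, ((lam j + ξ₀ : ℝ) : ℂ) ^ (-(t + k)))) := by
    intro k
    have hsum' : Summable fun j => ((lam j + ξ₀ : ℝ) : ℂ) ^ (-(t + k)) := by
      apply summable_shift n lam hlam hsum ξ₀ hξ₀ (t + k)
      simp only [Complex.add_re, Complex.natCast_re]
      have : (0:ℝ) ≤ k := Nat.cast_nonneg k
      linarith
    exact hsum'.hasSum.mul_left _
  have hfib_j : ∀ j : ℕ, HasSum (fun k => G (k, j))
      (((lam j + (ξ₀ + δ) : ℝ) : ℂ) ^ (-t)) := by
    intro j
    have ha : 0 < lam j + ξ₀ := by have := hlam j; linarith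
    have h := binom_shift t (lam j + ξ₀) δ ha (lt_of_lt_of_le hδ (by linarith [hlam j]))
    have he : ((lam j + ξ₀ + δ : ℝ) : ℂ) = ((lam j + (ξ₀ + δ) : ℝ) : ℂ) := by
      norm_num [add_assoc]
    rwa [he] at h
  -- sum over k of fiber sums equals total
  have hA : HasSum (fun k => ((∏ i ∈ range k, (-t - i)) / (k ! : ℂ)) * (δ:ℂ) ^ k
      * (∑' j, ((lam j + ξ₀ : ℝ) : ℂ) ^ (-(t + k)))) (∑' p, G p) :=
    HasSum.prod_fiberwise hGsum.hasSum hfib_k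
  have hGsum' : Summable (fun p : ℕ × ℕ => G p.swap) := hGsum.prod_symm
  have hB : HasSum (fun j => ((lam j + (ξ₀ + δ) : ℝ) : ℂ) ^ (-t)) (∑' p : ℕ × ℕ, G p.swap) :=
    HasSum.prod_fiberwise hGsum'.hasSum (fun j => hfib_j j)
  have heq : (∑' p : ℕ × ℕ, G p.swap) = ∑' p, G p := by
    exact (Equiv.prodComm ℕ ℕ).tsum_eq G
  rw [heq] at hB
  rw [← hB.tsum_eq] at hA
  exact hA

end Main2

section Poles

variable (n : ℕ)

lemma poles_mem_shift {t : ℂ} (ht : ∀ m : ℕ, t ≠ (n:ℂ)/2 - m) (k : ℕ) :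
    ∀ m : ℕ, t + k ≠ (n:ℂ)/2 - m := by
  intro m h
  apply ht (m + k)
  have : t = (n:ℂ)/2 - m - k := by linear_combination h
  rw [this]
  push_cast
  ring

lemma halfplane_no_pole {t : ℂ} (ht : (n:ℝ)/2 < t.re) : ∀ m : ℕ, t ≠ (n:ℂ)/2 - m := by
  intro m h
  have hre : t.re = (n:ℝ)/2 - m := by
    rw [h]
    simp [Complex.div_re, Complex.sub_re]
  have : (0:ℝ) ≤ m := Nat.cast_nonneg m
  rw [hre] at ht
  linarith

lemma isOpen_V : IsOpen {t : ℂ | ∀ m : ℕ, t ≠ (n:ℂ)/2 - m} := by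
  have h1 : {t : ℂ | ∀ m : ℕ, t ≠ (n:ℂ)/2 - m}
      = (⋃ m : ℕ, {((n:ℂ)/2 - m)})ᶜ := by
    ext t
    simp only [Set.mem_compl_iff, Set.mem_iUnion, Set.mem_singleton_iff, Set.mem_setOf_eq,
      not_exists]
  rw [h1]
  have hcl : IsClosed (⋃ m : ℕ, {((n:ℂ)/2 - m)}) := by
    apply LocallyFinite.isClosed_iUnion
    · intro x
      refine ⟨Metric.ball x 1, Metric.ball_mem_nhds x one_pos, ?_⟩
      obtain ⟨N, hN⟩ := exists_nat_gt ((n:ℝ)/2 + ‖x‖ + 1)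
      apply Set.Finite.subset (Set.finite_Iio N)
      intro m hm
      obtain ⟨y, hy1, hy2⟩ := hm
      simp only [Set.mem_singleton_iff] at hy1
      subst hy1
      simp only [Set.mem_Iio]
      have h2 : ‖((n:ℂ)/2 - m)‖ < ‖x‖ + 1 := by
        have hd := Metric.mem_ball.1 hy2
        rw [dist_eq_norm] at hd
        calc ‖((n:ℂ)/2 - m)‖ = ‖x + (((n:ℂ)/2 - m) - x)‖ := by ring_nf
          _ ≤ ‖x‖ + ‖((n:ℂ)/2 - m) - x‖ := norm_add_le _ _
          _ < ‖x‖ + 1 := by linarith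
      have h3 : (m:ℝ) - (n:ℝ)/2 ≤ ‖((n:ℂ)/2 - m)‖ := by
        have : |((n:ℂ)/2 - m).re| ≤ ‖((n:ℂ)/2 - m)‖ := Complex.abs_re_le_norm _
        have hre : ((n:ℂ)/2 - m).re = (n:ℝ)/2 - m := by
          simp [Complex.sub_re, Complex.div_re]
        rw [hre] at this
        calc (m:ℝ) - (n:ℝ)/2 ≤ |(n:ℝ)/2 - m| := by
              rw [abs_sub_comm]; exact le_abs_self _
          _ ≤ _ := this
      have : (m:ℝ) < (n:ℝ)/2 + ‖x‖ + 1 := by linarith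
      have h4 : (m:ℝ) < (N:ℝ) := lt_trans this hN
      exact_mod_cast h4
    · exact fun m => isClosed_singleton
  exact hcl.isOpen_compl

lemma preconnected_V : IsPreconnected {t : ℂ | ∀ m : ℕ, t ≠ (n:ℂ)/2 - m} := by
  have h1 : {t : ℂ | ∀ m : ℕ, t ≠ (n:ℂ)/2 - m}
      = (Set.range (fun m : ℕ => (n:ℂ)/2 - m))ᶜ := by
    ext t
    simp only [Set.mem_compl_iff, Set.mem_range, Set.mem_setOf_eq, not_exists]
    constructor
    · intro h m hm; exact h m hm.symm
    · intro h m hm; exact h m hm.symm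
  rw [h1]
  have hcount : (Set.range (fun m : ℕ => (n:ℂ)/2 - m)).Countable := Set.countable_range _
  have hrank : 1 < Module.rank ℝ ℂ := by
    rw [Complex.rank_real_complex]
    exact Nat.one_lt_ofNat
  exact (hcount.isPathConnected_compl_of_one_lt_rank hrank).isConnected.isPreconnected

end Poles

section R

variable (n : ℕ) (lam : ℕ → ℝ) (hlam : ∀ j, 0 ≤ lam j)
  (hsum : ∀ σ : ℝ, (n : ℝ) / 2 < σ → ∀ ξ : ℝ, 0 < ξ →
      Summable fun j => (lam j + ξ) ^ (-σ))
  (Z : ℝ → ℂ → ℂ)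
  (hZser : ∀ ξ : ℝ, 0 < ξ → ∀ s : ℂ, (n : ℝ) / 2 < s.re →
      Z ξ s = ∑' j, ((lam j + ξ : ℝ) : ℂ) ^ (-s))
  (hZan : ∀ ξ : ℝ, 0 < ξ → ∀ s : ℂ, (∀ m : ℕ, s ≠ (n : ℂ) / 2 - m) →
      AnalyticAt ℂ (Z ξ) s)

include hZan in
lemma g_analyticAt (ξ₀ : ℝ) (hξ₀ : 0 < ξ₀) (δ : ℝ) (m : ℕ) (t : ℂ)
    (ht : ∀ mm : ℕ, t ≠ (n:ℂ)/2 - mm) :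
    AnalyticAt ℂ (fun t : ℂ => ((∏ i ∈ range m, (-t - i)) / (m ! : ℂ)) * (δ:ℂ) ^ m
      * Z ξ₀ (t + m)) t := by
  have h1 : AnalyticAt ℂ (fun t : ℂ => (∏ i ∈ range m, (-t - i)) / (m ! : ℂ)) t := by
    apply AnalyticAt.div
    · exact Finset.analyticAt_fun_prod _ (fun i _ => (analyticAt_id.neg).sub analyticAt_const)
    · exact analyticAt_const
    · exact_mod_cast Nat.cast_ne_zero.mpr (Nat.factorial_ne_zero m)
  have h2 : AnalyticAt ℂ (fun t : ℂ => Z ξ₀ (t + m)) t := by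
    have hz := hZan ξ₀ hξ₀ (t + m) (poles_mem_shift n ht m)
    exact AnalyticAt.comp (g := Z ξ₀) (f := fun z : ℂ => z + m) hz
      (analyticAt_id.add analyticAt_const)
  exact (h1.mul analyticAt_const).mul h2

set_option maxHeartbeats 2000000 in
include hlam hsum hZser hZan in
lemma R_analyticAt (ξ₀ δ : ℝ) (hξ₀ : 0 < ξ₀) (hδ : |δ| < ξ₀)
    (t₀ : ℂ) (ht₀ : ∀ m : ℕ, t₀ ≠ (n:ℂ)/2 - m) :
    AnalyticAt ℂ (fun t : ℂ => ∑' k : ℕ, ((∏ i ∈ range k, (-t - i)) / (k ! : ℂ)) * (δ:ℂ) ^ k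
        * Z ξ₀ (t + k)) t₀
    ∧ Summable (fun k : ℕ => ((∏ i ∈ range k, (-t₀ - i)) / (k ! : ℂ)) * (δ:ℂ) ^ k
        * Z ξ₀ (t₀ + k)) := by
  classical
  obtain ⟨r₀, hr₀pos, hr₀V⟩ := Metric.isOpen_iff.1 (isOpen_V n) t₀ ht₀
  set r : ℝ := min r₀ 1 with hrdef
  have hrpos : 0 < r := lt_min hr₀pos one_pos
  have hr1 : r ≤ 1 := min_le_right _ _
  have hballV : Metric.ball t₀ r ⊆ {t : ℂ | ∀ m : ℕ, t ≠ (n:ℂ)/2 - m} :=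
    fun t ht => hr₀V (Metric.ball_subset_ball (min_le_left _ _) ht)
  set σ₁ : ℝ := (n:ℝ)/2 + 1 with hσ₁def
  obtain ⟨K, hK⟩ := exists_nat_gt (σ₁ + r - t₀.re)
  have hre_ball : ∀ t ∈ Metric.ball t₀ r, t₀.re - r < t.re := by
    intro t ht
    have h1 : |(t - t₀).re| ≤ ‖t - t₀‖ := Complex.abs_re_le_norm _
    have h2 : ‖t - t₀‖ < r := by rwa [Metric.mem_ball, dist_eq_norm] at ht
    have := (abs_lt.1 (lt_of_le_of_lt h1 h2)).1
    simp only [Complex.sub_re] at this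
    linarith
  have hσle : ∀ t ∈ Metric.ball t₀ r, ∀ k : ℕ, K ≤ k → σ₁ ≤ t.re + k := by
    intro t ht k hk
    have h1 := hre_ball t ht
    have h2 : (K:ℝ) ≤ (k:ℝ) := by exact_mod_cast hk
    linarith
  set B : ℝ := ‖t₀‖ + r + 1 with hBdef
  have hB1 : 1 ≤ B := by have := norm_nonneg t₀; rw [hBdef]; linarith
  set q : ℝ := |δ| / ξ₀ with hqdef
  have hq0 : 0 ≤ q := by positivity
  have hq1 : q < 1 := by rw [hqdef, div_lt_one hξ₀]; exact hδ
  set Sσ : ℝ := ∑' j, (lam j + ξ₀) ^ (-σ₁) with hSσdef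
  have hSσ0 : 0 ≤ Sσ := tsum_nonneg fun j => Real.rpow_nonneg (by have := hlam j; linarith) _
  set C₀ : ℝ := ξ₀ ^ (σ₁ - t₀.re + r) + ξ₀ ^ (σ₁ - t₀.re - r) with hC₀def
  have hC₀0 : 0 ≤ C₀ := by positivity
  have hC₀le : ∀ t ∈ Metric.ball t₀ r, ξ₀ ^ (σ₁ - t.re) ≤ C₀ := by
    intro t ht
    have h1 := hre_ball t ht
    have h2 : t.re < t₀.re + r := by
      have ha : |(t - t₀).re| ≤ ‖t - t₀‖ := Complex.abs_re_le_norm _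
      have hb : ‖t - t₀‖ < r := by rwa [Metric.mem_ball, dist_eq_norm] at ht
      have := (abs_lt.1 (lt_of_le_of_lt ha hb)).2
      simp only [Complex.sub_re] at this
      linarith
    rcases le_or_gt 1 ξ₀ with hc | hc
    · calc ξ₀ ^ (σ₁ - t.re) ≤ ξ₀ ^ (σ₁ - t₀.re + r) :=
            Real.rpow_le_rpow_of_exponent_le hc (by linarith)
        _ ≤ C₀ := by rw [hC₀def]; nlinarith [Real.rpow_nonneg hξ₀.le (σ₁ - t₀.re - r)]
    · calc ξ₀ ^ (σ₁ - t.re) ≤ ξ₀ ^ (σ₁ - t₀.re - r) :=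
            Real.rpow_le_rpow_of_exponent_ge hξ₀ hc.le (by linarith)
        _ ≤ C₀ := by rw [hC₀def]; nlinarith [Real.rpow_nonneg hξ₀.le (σ₁ - t₀.re + r)]
  -- the uniform bound on the tail terms
  have hbound : ∀ (k : ℕ) (t : ℂ), t ∈ Metric.ball t₀ r →
      ‖((∏ i ∈ range (k+K), (-t - i)) / ((k+K)! : ℂ)) * (δ:ℂ) ^ (k+K) * Z ξ₀ (t + ((k+K : ℕ) : ℂ))‖
        ≤ ((∏ i ∈ range (k+K), (B + i)) / ((k+K)! : ℝ) * q ^ (k+K)) * (Sσ * C₀) := by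
    intro k t ht
    set m : ℕ := k + K with hmdef
    have hm : σ₁ ≤ t.re + m := hσle t ht m (by omega)
    have hrem : (n:ℝ)/2 < (t + (m:ℂ)).re := by
      simp only [Complex.add_re, Complex.natCast_re]
      rw [hσ₁def] at hm
      linarith
    have hZeq : Z ξ₀ (t + m) = ∑' j, ((lam j + ξ₀ : ℝ) : ℂ) ^ (-(t + m)) :=
      hZser ξ₀ hξ₀ (t + m) hrem
    have hW : ‖Z ξ₀ (t + m)‖ ≤ Sσ * ξ₀ ^ (σ₁ - (t.re + m)) := by
      rw [hZeq]
      have := W_norm_bound n lam hlam hsum ξ₀ hξ₀ (t + m)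
        (by simp only [Complex.add_re, Complex.natCast_re]; rw [hσ₁def] at hm; linarith)
      simpa only [Complex.add_re, Complex.natCast_re] using this
    have hξ₀split : ξ₀ ^ (σ₁ - (t.re + m)) = ξ₀ ^ (σ₁ - t.re) * (ξ₀ ^ m)⁻¹ := by
      rw [show σ₁ - (t.re + m) = (σ₁ - t.re) + (-(m:ℝ)) by ring, Real.rpow_add hξ₀,
        Real.rpow_neg hξ₀.le, Real.rpow_natCast]
    have hc : ‖(∏ i ∈ range m, (-t - i)) / (m ! : ℂ)‖ ≤ (∏ i ∈ range m, (B + i)) / (m ! : ℝ) := by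
      apply coeff_norm_le
      have h2 : ‖t - t₀‖ < r := by rwa [Metric.mem_ball, dist_eq_norm] at ht
      calc ‖t‖ = ‖t₀ + (t - t₀)‖ := by ring_nf
        _ ≤ ‖t₀‖ + ‖t - t₀‖ := norm_add_le _ _
        _ ≤ B := by rw [hBdef]; linarith
    have hδk : ‖(δ:ℂ) ^ m‖ = |δ| ^ m := by rw [norm_pow, Complex.norm_real, Real.norm_eq_abs]
    have hAm0 : (0:ℝ) ≤ (∏ i ∈ range m, (B + i)) / (m ! : ℝ) := by
      have : 0 < ∏ i ∈ range m, (B + i) := Finset.prod_pos fun i _ => by positivity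
      positivity
    calc ‖(∏ i ∈ range m, (-t - i)) / (m ! : ℂ) * (δ:ℂ) ^ m * Z ξ₀ (t + m)‖
        = ‖(∏ i ∈ range m, (-t - i)) / (m ! : ℂ)‖ * ‖(δ:ℂ) ^ m‖ * ‖Z ξ₀ (t + m)‖ := by
          rw [norm_mul, norm_mul]
      _ ≤ ((∏ i ∈ range m, (B + i)) / (m ! : ℝ)) * |δ| ^ m
            * (Sσ * (ξ₀ ^ (σ₁ - t.re) * (ξ₀ ^ m)⁻¹)) := by
          rw [← hξ₀split]
          apply mul_le_mul _ hW (norm_nonneg _) (by positivity)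
          rw [hδk]
          exact mul_le_mul_of_nonneg_right hc (by positivity)
      _ ≤ ((∏ i ∈ range m, (B + i)) / (m ! : ℝ)) * |δ| ^ m
            * (Sσ * (C₀ * (ξ₀ ^ m)⁻¹)) := by
          apply mul_le_mul_of_nonneg_left _ (by positivity)
          apply mul_le_mul_of_nonneg_left _ hSσ0
          exact mul_le_mul_of_nonneg_right (hC₀le t ht) (by positivity)
      _ = ((∏ i ∈ range m, (B + i)) / (m ! : ℝ) * q ^ m) * (Sσ * C₀) := by
          rw [hqdef, div_pow]
          field_simp
  have huSummable : Summable (fun k : ℕ =>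
      ((∏ i ∈ range (k+K), (B + i)) / ((k+K)! : ℝ) * q ^ (k+K)) * (Sσ * C₀)) := by
    have h1 := (ratio_summable B q hB1 hq0 hq1).mul_right (Sσ * C₀)
    exact (summable_nat_add_iff K).mpr h1
  have hsummable : ∀ t ∈ Metric.ball t₀ r, Summable (fun k : ℕ =>
      ((∏ i ∈ range k, (-t - i)) / (k ! : ℂ)) * (δ:ℂ) ^ k * Z ξ₀ (t + k)) := by
    intro t ht
    apply (summable_nat_add_iff K).1
    exact Summable.of_norm_bounded huSummable (fun k => hbound k t ht)
  -- tail is a uniform limit of analytic functions on the ball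
  have htuo : TendstoUniformlyOn
      (fun (N : Finset ℕ) (t : ℂ) => ∑ k ∈ N,
        ((∏ i ∈ range (k+K), (-t - i)) / ((k+K)! : ℂ)) * (δ:ℂ) ^ (k+K) * Z ξ₀ (t + ((k+K : ℕ) : ℂ)))
      (fun t : ℂ => ∑' k : ℕ,
        ((∏ i ∈ range (k+K), (-t - i)) / ((k+K)! : ℂ)) * (δ:ℂ) ^ (k+K) * Z ξ₀ (t + ((k+K : ℕ) : ℂ)))
      Filter.atTop (Metric.ball t₀ r) :=
    tendstoUniformlyOn_tsum huSummable (fun k t ht => hbound k t ht)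
  have hTdiff : DifferentiableOn ℂ (fun t : ℂ => ∑' k : ℕ,
      ((∏ i ∈ range (k+K), (-t - i)) / ((k+K)! : ℂ)) * (δ:ℂ) ^ (k+K) * Z ξ₀ (t + ((k+K : ℕ) : ℂ)))
      (Metric.ball t₀ r) := by
    apply htuo.tendstoLocallyUniformlyOn.differentiableOn _ Metric.isOpen_ball
    apply Filter.Eventually.of_forall
    intro N t ht
    apply DifferentiableAt.differentiableWithinAt
    have : ∀ k ∈ N, DifferentiableAt ℂ (fun t : ℂ =>
        ((∏ i ∈ range (k+K), (-t - i)) / ((k+K)! : ℂ)) * (δ:ℂ) ^ (k+K)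
          * Z ξ₀ (t + ((k+K : ℕ) : ℂ))) t :=
      fun k _ => (g_analyticAt n Z hZan ξ₀ hξ₀ δ (k+K) t
        (fun mm => hballV ht mm)).differentiableAt
    exact DifferentiableAt.fun_sum this
  have hT_an : AnalyticAt ℂ (fun t : ℂ => ∑' k : ℕ,
      ((∏ i ∈ range (k+K), (-t - i)) / ((k+K)! : ℂ)) * (δ:ℂ) ^ (k+K)
        * Z ξ₀ (t + ((k+K : ℕ) : ℂ))) t₀ :=
    hTdiff.analyticAt (Metric.isOpen_ball.mem_nhds (Metric.mem_ball_self hrpos))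
  have hhead_an : AnalyticAt ℂ (fun t : ℂ => ∑ k ∈ range K,
      ((∏ i ∈ range k, (-t - i)) / (k ! : ℂ)) * (δ:ℂ) ^ k * Z ξ₀ (t + k)) t₀ :=
    Finset.analyticAt_fun_sum _ (fun k _ => g_analyticAt n Z hZan ξ₀ hξ₀ δ k t₀ ht₀)
  constructor
  · apply (hhead_an.add hT_an).congr
    filter_upwards [Metric.isOpen_ball.mem_nhds (Metric.mem_ball_self hrpos)] with t ht
    exact (hsummable t ht).sum_add_tsum_nat_add K
  · exact hsummable t₀ (Metric.mem_ball_self hrpos)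

end R

section Expansion

variable (n : ℕ) (lam : ℕ → ℝ) (hlam : ∀ j, 0 ≤ lam j)
  (hsum : ∀ σ : ℝ, (n : ℝ) / 2 < σ → ∀ ξ : ℝ, 0 < ξ →
      Summable fun j => (lam j + ξ) ^ (-σ))
  (Z : ℝ → ℂ → ℂ)
  (hZser : ∀ ξ : ℝ, 0 < ξ → ∀ s : ℂ, (n : ℝ) / 2 < s.re →
      Z ξ s = ∑' j, ((lam j + ξ : ℝ) : ℂ) ^ (-s))
  (hZan : ∀ ξ : ℝ, 0 < ξ → ∀ s : ℂ, (∀ m : ℕ, s ≠ (n : ℂ) / 2 - m) →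
      AnalyticAt ℂ (Z ξ) s)

set_option maxHeartbeats 2000000 in
include hlam hsum hZser hZan in
lemma expansion (ξ₀ δ : ℝ) (hξ₀ : 0 < ξ₀) (hδ : |δ| < ξ₀)
    (t : ℂ) (ht : ∀ m : ℕ, t ≠ (n:ℂ)/2 - m) :
    Z (ξ₀ + δ) t = ∑' k : ℕ, ((∏ i ∈ range k, (-t - i)) / (k ! : ℂ)) * (δ:ℂ) ^ k
      * Z ξ₀ (t + k) := by
  have hξδ : 0 < ξ₀ + δ := by have := abs_lt.1 hδ; linarith [this.1]
  have hf : AnalyticOnNhd ℂ (Z (ξ₀ + δ)) {u : ℂ | ∀ m : ℕ, u ≠ (n:ℂ)/2 - m} :=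
    fun u hu => hZan _ hξδ u hu
  have hg : AnalyticOnNhd ℂ
      (fun u : ℂ => ∑' k : ℕ, ((∏ i ∈ range k, (-u - i)) / (k ! : ℂ)) * (δ:ℂ) ^ k
        * Z ξ₀ (u + k)) {u : ℂ | ∀ m : ℕ, u ≠ (n:ℂ)/2 - m} :=
    fun u hu => (R_analyticAt n lam hlam hsum Z hZser hZan ξ₀ δ hξ₀ hδ u hu).1
  set z₀ : ℂ := (((n:ℝ)/2 + 1 : ℝ) : ℂ) with hz₀def
  have hz₀re : (n:ℝ)/2 < z₀.re := by
    rw [hz₀def, Complex.ofReal_re]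
    linarith
  have hz₀V : z₀ ∈ {u : ℂ | ∀ m : ℕ, u ≠ (n:ℂ)/2 - m} := halfplane_no_pole n hz₀re
  have hopenH : IsOpen {u : ℂ | (n:ℝ)/2 < u.re} :=
    isOpen_lt continuous_const Complex.continuous_re
  have hfg : Z (ξ₀ + δ) =ᶠ[nhds z₀]
      (fun u : ℂ => ∑' k : ℕ, ((∏ i ∈ range k, (-u - i)) / (k ! : ℂ)) * (δ:ℂ) ^ k
        * Z ξ₀ (u + k)) := by
    filter_upwards [hopenH.mem_nhds hz₀re] with u hu
    have h1 : Z (ξ₀ + δ) u = ∑' j, ((lam j + (ξ₀ + δ) : ℝ) : ℂ) ^ (-u) :=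
      hZser (ξ₀ + δ) hξδ u hu
    have h2 := (halfplane_expansion n lam hlam hsum ξ₀ δ hξ₀ hδ u hu).tsum_eq
    rw [h1, ← h2]
    apply tsum_congr
    intro k
    congr 1
    exact (hZser ξ₀ hξ₀ (u + k) (by
      simp only [Complex.add_re, Complex.natCast_re]
      have : (0:ℝ) ≤ (k:ℝ) := Nat.cast_nonneg k
      linarith)).symm
  exact hf.eqOn_of_preconnected_of_eventuallyEq hg (preconnected_V n) hz₀V hfg ht

end Expansion

/-- If a scalar power series (over `ℝ`, with values in `ℂ`) sums to `0` for all small real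
arguments, then all its coefficients vanish. -/
lemma coeff_eq_zero_of_hasSum_zero (b : ℕ → ℂ) (ε : ℝ) (hε : 0 < ε)
    (hz : ∀ δ : ℝ, |δ| < ε → HasSum (fun k => (δ ^ k : ℝ) • b k) 0) :
    ∀ k, b k = 0 := by
  set ρ : ℝ := ε / 2 with hρdef
  have hρ0 : 0 < ρ := by positivity
  have hρε : |ρ| < ε := by rw [abs_of_pos hρ0]; rw [hρdef]; linarith
  have hS := (hz ρ hρε).summable
  have hten : Filter.Tendsto (fun k => ‖(ρ ^ k : ℝ) • b k‖) Filter.atTop (nhds 0) := by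
    simpa using hS.tendsto_atTop_zero.norm
  obtain ⟨C, hC⟩ := hten.bddAbove_range
  have hCb : ∀ k, ‖(ρ ^ k : ℝ) • b k‖ ≤ C := fun k => hC (Set.mem_range_self k)
  set p : FormalMultilinearSeries ℝ ℝ ℂ :=
    fun k => ContinuousMultilinearMap.mkPiRing ℝ (Fin k) (b k) with hpdef
  have hpnorm : ∀ k, ‖p k‖ = ‖b k‖ := fun k => ContinuousMultilinearMap.norm_mkPiRing _
  have hrad : (ρ.toNNReal : ENNReal) ≤ p.radius := by
    apply p.le_radius_of_bound C
    intro k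
    rw [hpnorm k]
    have h1 : ‖(ρ ^ k : ℝ) • b k‖ = ‖b k‖ * ρ ^ k := by
      rw [norm_smul, Real.norm_eq_abs, _root_.abs_of_nonneg (by positivity), mul_comm]
    have h2 : ((ρ.toNNReal : ℝ)) ^ k = ρ ^ k := by
      rw [Real.coe_toNNReal _ hρ0.le]
    rw [h2, ← h1]
    exact hCb k
  have hball : HasFPowerSeriesOnBall (fun _ : ℝ => (0:ℂ)) p 0 (ρ.toNNReal : ENNReal) := by
    refine ⟨hrad, ?_, ?_⟩
    · exact_mod_cast (Real.toNNReal_pos.mpr hρ0)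
    · intro y hy
      have hy' : |y| < ε := by
        rw [EMetric.mem_ball, edist_zero_right] at hy
        have : ‖y‖₊ < ρ.toNNReal := by exact_mod_cast hy
        have h3 : ‖y‖ < ρ := by
          have := this
          rw [← Real.coe_toNNReal _ hρ0.le]
          exact_mod_cast this
        rw [Real.norm_eq_abs] at h3
        rw [hρdef] at h3
        linarith [abs_nonneg y]
      have h := hz y hy'
      have hterm : ∀ k : ℕ, (p k fun _ => y) = (y ^ k : ℝ) • b k := by
        intro k
        rw [hpdef]
        simp [ContinuousMultilinearMap.mkPiRing_apply, Finset.prod_const]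
      rw [funext hterm]
      simpa using h
  have hp0 : p = 0 := HasFPowerSeriesAt.eq_zero ⟨_, hball⟩
  intro k
  have h4 : p k = 0 := by rw [hp0]; rfl
  have h5 := congrArg (fun (m : ContinuousMultilinearMap ℝ (fun _ : Fin k => ℝ) ℂ) =>
    m (fun _ => (1:ℝ))) h4
  simpa [hpdef, ContinuousMultilinearMap.mkPiRing_apply] using h5

set_option maxHeartbeats 1000000 in
/-- For a non-negative sequence `{λⱼ}` with `∑ⱼ (λⱼ+ξ)^(-σ) < ∞` for `σ > n/2`,
`ξ > 0`, let `Z ξ` be the meromorphic continuation in `s` of `∑ⱼ (λⱼ+ξ)^(-s)`.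
Then for any fixed real `s ∉ -ℕ` away from the poles `{n/2 - m}` and any nonempty
open set `U ⊆ (0,∞)`, the function `ξ ↦ Z ξ s` is not identically zero on `U`. -/
theorem shifted_zeta_not_identically_zero (n : ℕ) (lam : ℕ → ℝ) (hlam : ∀ j, 0 ≤ lam j)
    (hsum : ∀ σ : ℝ, (n : ℝ) / 2 < σ → ∀ ξ : ℝ, 0 < ξ →
      Summable fun j => (lam j + ξ) ^ (-σ))
    (Z : ℝ → ℂ → ℂ)
    (hZser : ∀ ξ : ℝ, 0 < ξ → ∀ s : ℂ, (n : ℝ) / 2 < s.re →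
      Z ξ s = ∑' j, ((lam j + ξ : ℝ) : ℂ) ^ (-s))
    (hZan : ∀ ξ : ℝ, 0 < ξ → ∀ s : ℂ, (∀ m : ℕ, s ≠ (n : ℂ) / 2 - m) →
      AnalyticAt ℂ (Z ξ) s)
    (s : ℝ) (hs1 : ∀ m : ℕ, s ≠ -(m : ℝ)) (hs2 : ∀ m : ℕ, (s : ℂ) ≠ (n : ℂ) / 2 - m)
    (U : Set ℝ) (hU : IsOpen U) (hUne : U.Nonempty) (hUsub : U ⊆ Set.Ioi 0) :
    ∃ ξ ∈ U, Z ξ (s : ℂ) ≠ 0 := by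
  by_contra hcon
  push_neg at hcon
  obtain ⟨ξ₀, hξ₀U⟩ := hUne
  have hξ₀pos : 0 < ξ₀ := hUsub hξ₀U
  obtain ⟨ε₀, hε₀pos, hε₀ball⟩ := Metric.isOpen_iff.1 hU ξ₀ hξ₀U
  set ε : ℝ := min ε₀ ξ₀ with hεdef
  have hεpos : 0 < ε := lt_min hε₀pos hξ₀pos
  set b : ℕ → ℂ := fun k => ((∏ i ∈ range k, (-(s:ℂ) - i)) / (k ! : ℂ)) * Z ξ₀ ((s:ℂ) + k)
    with hbdef
  -- the power series in δ vanishes identically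
  have hz : ∀ δ : ℝ, |δ| < ε → HasSum (fun k => (δ ^ k : ℝ) • b k) 0 := by
    intro δ hδ
    have hδξ : |δ| < ξ₀ := lt_of_lt_of_le hδ (min_le_right _ _)
    have hmem : ξ₀ + δ ∈ U := by
      apply hε₀ball
      rw [Metric.mem_ball, Real.dist_eq, add_sub_cancel_left]
      exact lt_of_lt_of_le hδ (min_le_left _ _)
    have hexp := expansion n lam hlam hsum Z hZser hZan ξ₀ δ hξ₀pos hδξ (s:ℂ) hs2
    have hsummable := (R_analyticAt n lam hlam hsum Z hZser hZan ξ₀ δ hξ₀pos hδξ (s:ℂ) hs2).2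
    have hzero : Z (ξ₀ + δ) (s:ℂ) = 0 := hcon _ hmem
    have h0 : (∑' k : ℕ, ((∏ i ∈ range k, (-(s:ℂ) - i)) / (k ! : ℂ)) * (δ:ℂ) ^ k
        * Z ξ₀ ((s:ℂ) + k)) = 0 := by rw [← hexp]; exact hzero
    have hHS := hsummable.hasSum
    rw [h0] at hHS
    have hfun : (fun k : ℕ => (δ ^ k : ℝ) • b k)
        = fun k : ℕ => ((∏ i ∈ range k, (-(s:ℂ) - i)) / (k ! : ℂ)) * (δ:ℂ) ^ k
          * Z ξ₀ ((s:ℂ) + k) := by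
      funext k
      rw [hbdef]
      rw [Complex.real_smul]
      push_cast
      ring
    rw [hfun]
    exact hHS
  have hb0 := coeff_eq_zero_of_hasSum_zero b ε hεpos hz
  -- pick K with s + K in the convergence halfplane
  obtain ⟨K, hK⟩ := exists_nat_gt ((n:ℝ)/2 - s)
  have hsK : (n:ℝ)/2 < s + K := by linarith
  -- the K-th coefficient is nonzero: contradiction
  have hcne : (∏ i ∈ range K, (-(s:ℂ) - i)) / (K ! : ℂ) ≠ 0 := by
    apply div_ne_zero
    · apply Finset.prod_ne_zero_iff.mpr
      intro i _
      intro hzero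
      apply hs1 i
      have : (s:ℂ) = ((-(i:ℝ) : ℝ) : ℂ) := by
        push_cast
        linear_combination -hzero
      exact_mod_cast this
    · exact_mod_cast Nat.cast_ne_zero.mpr (Nat.factorial_ne_zero K)
  have hZpos : Z ξ₀ ((s:ℂ) + K) ≠ 0 := by
    have hre : (n:ℝ)/2 < ((s:ℂ) + K).re := by
      simp only [Complex.add_re, Complex.ofReal_re, Complex.natCast_re]
      exact hsK
    rw [hZser ξ₀ hξ₀pos _ hre]
    have hterm : ∀ j : ℕ, ((lam j + ξ₀ : ℝ) : ℂ) ^ (-((s:ℂ) + K))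
        = (((lam j + ξ₀) ^ (-(s + (K:ℝ))) : ℝ) : ℂ) := by
      intro j
      have ha : 0 ≤ lam j + ξ₀ := by have := hlam j; linarith
      rw [Complex.ofReal_cpow ha]
      push_cast
      ring_nf
    rw [tsum_congr hterm, ← Complex.ofReal_tsum]
    have hpos : 0 < ∑' j, (lam j + ξ₀) ^ (-(s + (K:ℝ))) := by
      apply Summable.tsum_pos (hsum (s + K) hsK ξ₀ hξ₀pos) (fun j => Real.rpow_nonneg
        (by have := hlam j; linarith) _) 0
      exact Real.rpow_pos_of_pos (by have := hlam 0; linarith) _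
    exact_mod_cast hpos.ne'
  have : b K = 0 := hb0 K
  rw [hbdef] at this
  exact (mul_ne_zero hcne hZpos) this
end
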